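/- For η < −1 and strike K > 0, the exponentially dampened call payoff x ↦ e^{ηx}(e^x − K)^+ belongs to L¹(ℝ), and its Fourier transform equals f̂^K(z − iη) = K^{iz+1+η} / ((iz+η)(iz+1+η)) for every z ∈ ℝ; moreover k ↦ f̂^{e^k}(z − iη) extends holomorphically in k = log K to all of ℂ. -/

import Mathlib

open MeasureTheory Set

private lemma auxIntOn {c : ℂ} (hc : c.re < 0) (a : ℝ) :
    IntegrableOn (fun x : ℝ => Complex.exp (c * x)) (Set.Ioi a) := by
  have : IntegrableOn (fun x : ℝ => Real.exp (-(-c.re) * x)) (Ioi a) :=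
    exp_neg_integrableOn_Ioi a (by linarith)
  refine this.mono' ?_ ?_
  · exact (Complex.continuous_exp.comp
      (continuous_const.mul Complex.continuous_ofReal)).aestronglyMeasurable
  · filter_upwards with x
    simp [Complex.norm_exp, Complex.mul_re]

private lemma auxIntEq {c : ℂ} (hc : c.re < 0) (a : ℝ) :
    ∫ x in Set.Ioi a, Complex.exp (c * x) = -Complex.exp (c * a) / c := by
  have hc0 : c ≠ 0 := fun h => by simp [h] at hc
  have hderiv : ∀ x ∈ Ici a,
      HasDerivAt (fun y : ℝ => Complex.exp (c * y) / c) (Complex.exp (c * x)) x := by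
    intro x _
    have h1 : HasDerivAt (fun y : ℂ => Complex.exp (c * y) / c) (Complex.exp (c * x)) (x : ℂ) := by
      have := (((hasDerivAt_id (x : ℂ)).const_mul c).cexp).div_const c
      simpa [mul_comm c, mul_div_assoc, mul_div_cancel_left₀ _ hc0, div_self hc0, mul_one]
        using this
    exact h1.comp_ofReal
  have htend : Filter.Tendsto (fun x : ℝ => Complex.exp (c * x) / c) Filter.atTop (nhds 0) := by
    rw [tendsto_zero_iff_norm_tendsto_zero]
    have h2 : Filter.Tendsto (fun x : ℝ => Real.exp (c.re * x) / ‖c‖)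
        Filter.atTop (nhds 0) := by
      have := (Real.tendsto_exp_atBot.comp
        (Filter.Tendsto.const_mul_atTop_of_neg hc Filter.tendsto_id)).div_const ‖c‖
      simpa using this
    convert h2 using 2 with x
    simp [norm_div, Complex.norm_exp, Complex.mul_re]
  have := integral_Ioi_of_hasDerivAt_of_tendsto' hderiv (auxIntOn hc a) htend
  rw [this]; ring

private lemma auxKey (η : ℝ) (hη : η < -1) (K : ℝ) (hK : 0 < K) (z : ℝ) :
    (∫ x : ℝ, Complex.exp (Complex.I * z * x) *
        ((Real.exp (η * x) * max (Real.exp x - K) 0 : ℝ) : ℂ)) =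
      (K : ℂ) ^ (Complex.I * z + 1 + η) /
        ((Complex.I * z + η) * (Complex.I * z + 1 + η)) := by
  set a : ℝ := Real.log K with ha
  set c0 : ℂ := Complex.I * z + η with hc0def
  set c1 : ℂ := Complex.I * z + 1 + η with hc1def
  have hc0re : c0.re = η := by simp [hc0def]
  have hc1re : c1.re = 1 + η := by simp [hc1def]
  have hc0' : c0.re < 0 := by rw [hc0re]; linarith
  have hc1' : c1.re < 0 := by rw [hc1re]; linarith
  have hc0ne : c0 ≠ 0 := fun h => by rw [h] at hc0re; simp at hc0re; linarith
  have hc1ne : c1 ≠ 0 := fun h => by rw [h] at hc1re; simp at hc1re; linarith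
  have hfun : (fun x : ℝ => Complex.exp (Complex.I * z * x) *
      ((Real.exp (η * x) * max (Real.exp x - K) 0 : ℝ) : ℂ)) =
      Set.indicator (Ioi a) (fun x : ℝ => Complex.exp (c1 * x) - K * Complex.exp (c0 * x)) := by
    funext x
    rcases le_or_gt x a with hx | hx
    · rw [Set.indicator_of_notMem (by simpa using hx)]
      have : Real.exp x ≤ K := by
        rw [← Real.exp_log hK]; exact Real.exp_le_exp.2 hx
      simp [max_eq_right (by linarith : Real.exp x - K ≤ 0)]
    · rw [Set.indicator_of_mem (Set.mem_Ioi.mpr hx)]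
      have hKx : K < Real.exp x := by
        rw [← Real.exp_log hK]; exact Real.exp_lt_exp.2 hx
      rw [max_eq_left (by linarith : (0:ℝ) ≤ Real.exp x - K)]
      push_cast [Complex.ofReal_exp]
      rw [hc0def, hc1def]
      rw [show (Complex.I * z + 1 + η) * x = Complex.I * z * x + x + η * x by ring,
        show (Complex.I * z + η) * x = Complex.I * z * x + η * x by ring,
        Complex.exp_add, Complex.exp_add, Complex.exp_add]
      ring
  rw [hfun, integral_indicator measurableSet_Ioi]
  rw [integral_sub (auxIntOn hc1' a) ((auxIntOn hc0' a).const_mul _),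
    integral_const_mul, auxIntEq hc1' a, auxIntEq hc0' a]
  have hlog : Complex.log (K : ℂ) = (a : ℂ) := by
    rw [ha, Complex.ofReal_log hK.le]
  have hE : (K : ℂ) ^ c1 = Complex.exp (c1 * a) := by
    rw [Complex.cpow_def_of_ne_zero (by exact_mod_cast hK.ne'), hlog, mul_comm]
  have hKexp : (K : ℂ) = Complex.exp (a : ℂ) := by
    rw [← Complex.ofReal_exp, ha, Real.exp_log hK]
  have hKc0 : (K : ℂ) * Complex.exp (c0 * a) = Complex.exp (c1 * a) := by
    rw [hKexp, ← Complex.exp_add]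
    congr 1
    rw [hc0def, hc1def]; ring
  rw [hE]
  rw [show -Complex.exp (c1 * ↑a) / c1 - ↑K * (-Complex.exp (c0 * ↑a) / c0) =
    -Complex.exp (c1 * ↑a) / c1 + (↑K * Complex.exp (c0 * ↑a)) / c0 by ring, hKc0]
  have h10 : c1 - c0 = 1 := by rw [hc0def, hc1def]; ring
  rw [div_add_div _ _ hc1ne hc0ne,
    show -Complex.exp (c1 * ↑a) * c0 + c1 * Complex.exp (c1 * ↑a) = Complex.exp (c1 * ↑a) from by
      linear_combination Complex.exp (c1 * ↑a) * h10,
    mul_comm c1 c0]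

theorem stmt12 (η : ℝ) (hη : η < -1) (K : ℝ) (hK : 0 < K) :
    Integrable (fun x : ℝ => Real.exp (η * x) * max (Real.exp x - K) 0) ∧
    (∀ z : ℝ,
      (∫ x : ℝ, Complex.exp (Complex.I * z * x) *
          ((Real.exp (η * x) * max (Real.exp x - K) 0 : ℝ) : ℂ)) =
        (K : ℂ) ^ (Complex.I * z + 1 + η) /
          ((Complex.I * z + η) * (Complex.I * z + 1 + η))) ∧
    (∀ z : ℝ, ∃ g : ℂ → ℂ, Differentiable ℂ g ∧ ∀ k : ℝ,
      g k = ∫ x : ℝ, Complex.exp (Complex.I * z * x) *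
        ((Real.exp (η * x) * max (Real.exp x - Real.exp k) 0 : ℝ) : ℂ)) := by
  refine ⟨?_, fun z => auxKey η hη K hK z, ?_⟩
  · -- integrability
    set a : ℝ := Real.log K with ha
    have hfun : (fun x : ℝ => Real.exp (η * x) * max (Real.exp x - K) 0) =
        Set.indicator (Ioi a)
          (fun x : ℝ => Real.exp ((η + 1) * x) - K * Real.exp (η * x)) := by
      funext x
      rcases le_or_gt x a with hx | hx
      · rw [Set.indicator_of_notMem (by simpa using hx)]
        have : Real.exp x ≤ K := by
          rw [← Real.exp_log hK]; exact Real.exp_le_exp.2 hx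
        simp [max_eq_right (by linarith : Real.exp x - K ≤ 0)]
      · rw [Set.indicator_of_mem (Set.mem_Ioi.mpr hx)]
        have hKx : K < Real.exp x := by
          rw [← Real.exp_log hK]; exact Real.exp_lt_exp.2 hx
        rw [max_eq_left (by linarith : (0:ℝ) ≤ Real.exp x - K)]
        rw [show (η + 1) * x = η * x + x by ring, Real.exp_add]
        ring
    rw [hfun, integrable_indicator_iff measurableSet_Ioi]
    have h1 : IntegrableOn (fun x : ℝ => Real.exp ((η + 1) * x)) (Ioi a) := by
      have := exp_neg_integrableOn_Ioi a (show (0:ℝ) < -(η + 1) by linarith)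
      simpa using this
    have h2 : IntegrableOn (fun x : ℝ => Real.exp (η * x)) (Ioi a) := by
      have := exp_neg_integrableOn_Ioi a (show (0:ℝ) < -η by linarith)
      simpa using this
    exact h1.sub (h2.const_mul K)
  · -- holomorphic extension in k = log K
    intro z
    refine ⟨fun w => Complex.exp ((Complex.I * z + 1 + η) * w) /
      ((Complex.I * z + η) * (Complex.I * z + 1 + η)), ?_, ?_⟩
    · exact (Complex.differentiable_exp.comp (differentiable_id.const_mul _)).div_const _
    · intro k
      rw [auxKey η hη (Real.exp k) (Real.exp_pos k) z]
      rw [Complex.ofReal_exp, Complex.cpow_def_of_ne_zero (Complex.exp_ne_zero _),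
        Complex.log_exp (by simpa using Real.pi_pos) (by simp [Real.pi_pos.le]), mul_comm]
      ring_nf
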